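/- The assignment a1 ↦ 0, a2 ↦ ε, b1 ↦ 2ε defines a surjective ℚ-algebra homomorphism ℚ[a1, a2, b1]/(b1 − 2a2 + a1², a2² − b1·(2a2 − a1²), a2²·b1 − a1) → ℚ[ε]/(ε²); i.e. the three relations vanish under this assignment in ℚ[ε]/(ε²). -/
import Mathlib


open MvPolynomial

noncomputable def smallQH_IG26' : Type :=
  MvPolynomial (Fin 3) ℚ ⧸
    Ideal.span {(X 2 : MvPolynomial (Fin 3) ℚ) - 2 * X 1 + (X 0) ^ 2,
      (X 1) ^ 2 - X 2 * (2 * X 1 - (X 0) ^ 2),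
      (X 1) ^ 2 * X 2 - X 0}

noncomputable instance : CommRing smallQH_IG26' := Ideal.Quotient.commRing _
noncomputable instance : Algebra ℚ smallQH_IG26' := Ideal.Quotient.algebra ℚ

lemma eps_sq : (DualNumber.eps : DualNumber ℚ) ^ 2 = 0 := by
  rw [sq, DualNumber.eps_mul_eps]

noncomputable def IG26aeval : MvPolynomial (Fin 3) ℚ →ₐ[ℚ] DualNumber ℚ :=
  aeval ![0, DualNumber.eps, 2 * DualNumber.eps]

lemma IG26aeval_C (r : ℚ) : IG26aeval (C r) = algebraMap ℚ (DualNumber ℚ) r := by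
  simp [IG26aeval]

lemma IG26aeval_X0 : IG26aeval (X 0) = 0 := by simp [IG26aeval]
lemma IG26aeval_X1 : IG26aeval (X 1) = DualNumber.eps := by simp [IG26aeval]
lemma IG26aeval_X2 : IG26aeval (X 2) = 2 * DualNumber.eps := by simp [IG26aeval]

lemma IG26_ker : ∀ p ∈ Ideal.span {(X 2 : MvPolynomial (Fin 3) ℚ) - 2 * X 1 + (X 0) ^ 2,
    (X 1) ^ 2 - X 2 * (2 * X 1 - (X 0) ^ 2),
    (X 1) ^ 2 * X 2 - X 0}, IG26aeval p = 0 := by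
  have h := eps_sq
  intro p hp
  have hle : Ideal.span {(X 2 : MvPolynomial (Fin 3) ℚ) - 2 * X 1 + (X 0) ^ 2,
      (X 1) ^ 2 - X 2 * (2 * X 1 - (X 0) ^ 2),
      (X 1) ^ 2 * X 2 - X 0} ≤ RingHom.ker IG26aeval.toRingHom := by
    rw [Ideal.span_le]
    intro q hq
    simp only [Set.mem_insert_iff, Set.mem_singleton_iff] at hq
    have e0 := IG26aeval_X0
    have e1 := IG26aeval_X1
    have e2 := IG26aeval_X2
    rcases hq with rfl | rfl | rfl
    · show IG26aeval _ = 0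
      rw [map_add, map_sub, map_mul, map_pow, map_ofNat, e0, e1, e2]
      ring
    · show IG26aeval _ = 0
      rw [map_sub, map_pow, map_mul, map_sub, map_mul, map_pow, map_ofNat, e0, e1, e2]
      linear_combination (-3 : DualNumber ℚ) * h
    · show IG26aeval _ = 0
      rw [map_sub, map_mul, map_pow, e0, e1, e2]
      linear_combination (2 * DualNumber.eps) * h
  exact hle hp

/-- The fat point of `QH(IG(2,6))`: the assignment `a1 ↦ 0, a2 ↦ ε, b1 ↦ 2ε` kills the
three relations, hence yields a surjective `ℚ`-algebra map onto `ℚ[ε]/(ε²)`. -/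
theorem IG26_fat_point_surjection :
    (let a1 : DualNumber ℚ := 0
     let a2 : DualNumber ℚ := DualNumber.eps
     let b1 : DualNumber ℚ := 2 * DualNumber.eps
     b1 - 2 * a2 + a1 ^ 2 = 0 ∧ a2 ^ 2 - b1 * (2 * a2 - a1 ^ 2) = 0 ∧ a2 ^ 2 * b1 - a1 = 0) ∧
    ∃ f : smallQH_IG26' →ₐ[ℚ] DualNumber ℚ, Function.Surjective f ∧
      f (Ideal.Quotient.mk _ (X 0)) = 0 ∧
      f (Ideal.Quotient.mk _ (X 1)) = DualNumber.eps ∧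
      f (Ideal.Quotient.mk _ (X 2)) = 2 * DualNumber.eps := by
  have h := eps_sq
  refine ⟨⟨by ring, by linear_combination (-3 : DualNumber ℚ) * h,
      by linear_combination (2 * DualNumber.eps) * h⟩, ?_⟩
  refine ⟨Ideal.Quotient.liftₐ _ IG26aeval IG26_ker, ?_, ?_, ?_, ?_⟩
  · intro x
    refine ⟨Ideal.Quotient.mk _ (C x.fst + C x.snd * X 1), ?_⟩
    show IG26aeval (C x.fst + C x.snd * X 1) = x
    rw [map_add, map_mul, IG26aeval_C, IG26aeval_C, IG26aeval_X1]
    rw [show (algebraMap ℚ (DualNumber ℚ)) x.fst = TrivSqZeroExt.inl x.fst from rfl,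
      show (algebraMap ℚ (DualNumber ℚ)) x.snd = TrivSqZeroExt.inl x.snd from rfl]
    have hx : TrivSqZeroExt.inl x.snd * DualNumber.eps = TrivSqZeroExt.inr x.snd := by
      rw [show (DualNumber.eps : DualNumber ℚ) = TrivSqZeroExt.inr 1 from rfl,
        TrivSqZeroExt.inl_mul_inr, smul_eq_mul, mul_one]
    rw [hx, TrivSqZeroExt.inl_fst_add_inr_snd_eq]
  · exact IG26aeval_X0
  · exact IG26aeval_X1
  · exact IG26aeval_X2
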